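/- arXiv:0807.1217 — 3 statements merged into one kernel-verified Lean document; each statement's English description precedes it below -/
import Mathlib

section
/- With reduced data (D connected, no rigid edges, Δ-bonds nonempty) and forbidden vertex v_0, the coloring of the cover edges of the push-order on Δ-bonds by the pushed vertex v ∈ V\{v_0} is simultaneously a U-coloring and an L-coloring, and the push-order is connected; consequently the set of Δ-bonds B_Δ(D,c_l,c_u), ordered by push-reachability avoiding v_0, is a distributive lattice. -/
def UColoring {V κ : Type*} (A : V → V → Prop) (c : V → V → κ) : Prop :=
  (∀ v u w : V, A v u → A v w → u ≠ w → c v u ≠ c v w) ∧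
  (∀ v u w : V, A v u → A v w → u ≠ w →
    ∃ z : V, A u z ∧ A w z ∧ c v u = c w z ∧ c v w = c u z)

structure ClosedWalk (V A : Type*) (src tgt : A → V) where
  len : ℕ
  arcs : ℕ → A
  dir : ℕ → Bool
  verts : ℕ → V
  closed : verts 0 = verts len
  compat : ∀ i, i < len →
    (dir i = true → src (arcs i) = verts i ∧ tgt (arcs i) = verts (i + 1)) ∧
    (dir i = false → tgt (arcs i) = verts i ∧ src (arcs i) = verts (i + 1))

def ClosedWalk.delta {V A : Type*} {src tgt : A → V}
    (C : ClosedWalk V A src tgt) (x : A → ℤ) : ℤ :=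
  ∑ i ∈ Finset.range C.len, (if C.dir i then x (C.arcs i) else - x (C.arcs i))

def IsDeltaBond {V A : Type*} (src tgt : A → V) (cl cu : A → ℤ)
    (Δ : ClosedWalk V A src tgt → ℤ) (x : A → ℤ) : Prop :=
  (∀ a : A, cl a ≤ x a ∧ x a ≤ cu a) ∧
  (∀ C : ClosedWalk V A src tgt, C.delta x = Δ C)

def pushSet {V A : Type*} (src tgt : A → V) (U : V → Prop) [DecidablePred U]
    (x : A → ℤ) : A → ℤ :=
  fun a => x a + (if U (src a) ∧ ¬ U (tgt a) then 1 else 0)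
               - (if U (tgt a) ∧ ¬ U (src a) then 1 else 0)

/-- The subtype of Δ-bonds. -/
def Bond {V A : Type*} (src tgt : A → V) (cl cu : A → ℤ)
    (Δ : ClosedWalk V A src tgt → ℤ) : Type _ :=
  {x : A → ℤ // IsDeltaBond src tgt cl cu Δ x}

/-- One legal single-vertex push (avoiding `v₀`) between Δ-bonds. -/
def PushStep {V A : Type*} [DecidableEq V] (src tgt : A → V) (cl cu : A → ℤ)
    (Δ : ClosedWalk V A src tgt → ℤ) (v₀ : V)
    (s t : Bond src tgt cl cu Δ) : Prop :=
  ∃ v : V, v ≠ v₀ ∧ t.1 = pushSet src tgt (· = v) s.1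


namespace Stmt15

variable {V A : Type}

def IsWalk (src tgt : A → V) : V → List (A × Bool) → V → Prop
  | u, [], w => u = w
  | u, (a, true) :: l, w => src a = u ∧ IsWalk src tgt (tgt a) l w
  | u, (a, false) :: l, w => tgt a = u ∧ IsWalk src tgt (src a) l w

def wsum (d : A → ℤ) (l : List (A × Bool)) : ℤ :=
  (l.map fun p => if p.2 then d p.1 else - d p.1).sum

def flipW (l : List (A × Bool)) : List (A × Bool) :=
  (l.map fun p => (p.1, !p.2)).reverse

@[simp] lemma wsum_nil (d : A → ℤ) : wsum d [] = 0 := rfl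

@[simp] lemma wsum_cons (d : A → ℤ) (p : A × Bool) (l : List (A × Bool)) :
    wsum d (p :: l) = (if p.2 then d p.1 else - d p.1) + wsum d l := by
  simp [wsum]

@[simp] lemma wsum_append (d : A → ℤ) (l l' : List (A × Bool)) :
    wsum d (l ++ l') = wsum d l + wsum d l' := by
  simp [wsum]

lemma isWalk_append {src tgt : A → V} :
    ∀ (l : List (A × Bool)) (u w z : V) (l' : List (A × Bool)),
      IsWalk src tgt u l w → IsWalk src tgt w l' z → IsWalk src tgt u (l ++ l') z := by
  intro l
  induction l with
  | nil => intro u w z l' h h'; cases h; exact h'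
  | cons p l ih =>
    intro u w z l' h h'
    obtain ⟨a, b⟩ := p
    cases b with
    | true => exact ⟨h.1, ih _ _ _ _ h.2 h'⟩
    | false => exact ⟨h.1, ih _ _ _ _ h.2 h'⟩

lemma isWalk_flip {src tgt : A → V} :
    ∀ (l : List (A × Bool)) (u w : V), IsWalk src tgt u l w → IsWalk src tgt w (flipW l) u := by
  intro l
  induction l with
  | nil => intro u w h; cases h; exact rfl
  | cons p l ih =>
    intro u w h
    obtain ⟨a, b⟩ := p
    have hflip : flipW ((a, b) :: l) = flipW l ++ [(a, !b)] := by simp [flipW]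
    rw [hflip]
    cases b with
    | true =>
      exact isWalk_append _ _ _ _ _ (ih _ _ h.2) ⟨rfl, h.1⟩
    | false =>
      exact isWalk_append _ _ _ _ _ (ih _ _ h.2) ⟨rfl, h.1⟩

lemma wsum_flip (d : A → ℤ) : ∀ l : List (A × Bool), wsum d (flipW l) = - wsum d l := by
  intro l
  induction l with
  | nil => simp [flipW]
  | cons p l ih =>
    obtain ⟨a, b⟩ := p
    have hflip : flipW ((a, b) :: l) = flipW l ++ [(a, !b)] := by simp [flipW]
    rw [hflip]
    cases b <;> simp [ih] <;> ring

lemma wsum_sub (x y : A → ℤ) : ∀ l : List (A × Bool),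
    wsum (fun a => x a - y a) l = wsum x l - wsum y l := by
  intro l
  induction l with
  | nil => simp
  | cons p l ih =>
    obtain ⟨a, b⟩ := p
    cases b <;> simp [ih] <;> ring

lemma wsum_tel {src tgt : A → V} (d : A → ℤ) (π : V → ℤ)
    (hd : ∀ a, d a = π (src a) - π (tgt a)) :
    ∀ (l : List (A × Bool)) (u w : V), IsWalk src tgt u l w → wsum d l = π u - π w := by
  intro l
  induction l with
  | nil => intro u w h; cases h; simp
  | cons p l ih =>
    intro u w h
    obtain ⟨a, b⟩ := p
    cases b with
    | true =>
      obtain ⟨h1, h2⟩ := h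
      rw [wsum_cons, ih _ _ h2, hd, h1]
      simp only [if_true]
      ring
    | false =>
      obtain ⟨h1, h2⟩ := h
      rw [wsum_cons, ih _ _ h2, hd, h1]
      simp only [Bool.false_eq_true, if_false]
      ring_nf

def wverts (src tgt : A → V) : V → List (A × Bool) → ℕ → V
  | u, _, 0 => u
  | u, [], _ + 1 => u
  | _, (a, b) :: l, i + 1 => wverts src tgt (if b then tgt a else src a) l i

lemma wverts_end {src tgt : A → V} :
    ∀ (l : List (A × Bool)) (u w : V), IsWalk src tgt u l w →
      wverts src tgt u l l.length = w := by
  intro l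
  induction l with
  | nil => intro u w h; exact h
  | cons p l ih =>
    intro u w h
    obtain ⟨a, b⟩ := p
    cases b with
    | true => simpa [wverts] using ih _ _ h.2
    | false => simpa [wverts] using ih _ _ h.2

lemma wverts_compat {src tgt : A → V} (d0 : A × Bool) :
    ∀ (l : List (A × Bool)) (u w : V), IsWalk src tgt u l w →
      ∀ i, i < l.length →
        ((l.getD i d0).2 = true → src (l.getD i d0).1 = wverts src tgt u l i ∧
          tgt (l.getD i d0).1 = wverts src tgt u l (i + 1)) ∧
        ((l.getD i d0).2 = false → tgt (l.getD i d0).1 = wverts src tgt u l i ∧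
          src (l.getD i d0).1 = wverts src tgt u l (i + 1)) := by
  intro l
  induction l with
  | nil => intro u w h i hi; simp at hi
  | cons p l ih =>
    intro u w h i hi
    obtain ⟨a, b⟩ := p
    match i with
    | 0 =>
      cases b with
      | true =>
        refine ⟨fun _ => ⟨h.1, ?_⟩, fun hb => by simp at hb⟩
        simp [wverts]
      | false =>
        refine ⟨fun hb => by simp at hb, fun _ => ⟨h.1, ?_⟩⟩
        simp [wverts]
    | i + 1 =>
      have hi' : i < l.length := by simpa using hi
      cases b with
      | true => simpa [wverts] using ih _ _ h.2 i hi'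
      | false => simpa [wverts] using ih _ _ h.2 i hi'

def toClosed (src tgt : A → V) (u : V) (l : List (A × Bool)) (d0 : A × Bool)
    (h : IsWalk src tgt u l u) : ClosedWalk V A src tgt where
  len := l.length
  arcs i := (l.getD i d0).1
  dir i := (l.getD i d0).2
  verts := wverts src tgt u l
  closed := by
    have h1 : wverts src tgt u l 0 = u := by cases l <;> rfl
    rw [h1, wverts_end l u u h]
  compat i hi := wverts_compat d0 l u u h i hi

lemma delta_list (x : A → ℤ) (d0 : A × Bool) :
    ∀ l : List (A × Bool),
      (∑ i ∈ Finset.range l.length,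
        (if (l.getD i d0).2 then x (l.getD i d0).1 else - x (l.getD i d0).1)) = wsum x l := by
  intro l
  induction l with
  | nil => simp
  | cons p l ih =>
    rw [wsum_cons, ← ih]
    rw [List.length_cons, Finset.sum_range_succ']
    simp [add_comm]

lemma delta_toClosed (src tgt : A → V) (u : V) (l : List (A × Bool)) (d0 : A × Bool)
    (h : IsWalk src tgt u l u) (x : A → ℤ) :
    (toClosed src tgt u l d0 h).delta x = wsum x l :=
  delta_list x d0 l

lemma exists_walk {src tgt : A → V}
    (hconn : ∀ u w : V, Relation.ReflTransGen
      (fun p q => ∃ a : A, (src a = p ∧ tgt a = q) ∨ (src a = q ∧ tgt a = p)) u w)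
    (u w : V) : ∃ l, IsWalk src tgt u l w := by
  induction hconn u w with
  | refl => exact ⟨[], rfl⟩
  | tail _ hstep ih =>
    obtain ⟨l, hl⟩ := ih
    obtain ⟨a, ha | ha⟩ := hstep
    · exact ⟨l ++ [(a, true)], isWalk_append _ _ _ _ _ hl ⟨ha.1, ha.2⟩⟩
    · exact ⟨l ++ [(a, false)], isWalk_append _ _ _ _ _ hl ⟨ha.2, ha.1⟩⟩

lemma wsum_closed_eq {src tgt : A → V} {cl cu : A → ℤ} {Δ : ClosedWalk V A src tgt → ℤ}
    {x y : A → ℤ} (hx : IsDeltaBond src tgt cl cu Δ x) (hy : IsDeltaBond src tgt cl cu Δ y)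
    {u : V} {l : List (A × Bool)} (h : IsWalk src tgt u l u) : wsum x l = wsum y l := by
  cases l with
  | nil => simp
  | cons p l' =>
    rw [← delta_toClosed src tgt u _ p h x, ← delta_toClosed src tgt u _ p h y,
      hx.2 _, hy.2 _]

section Pot

variable {src tgt : A → V} {cl cu : A → ℤ} {Δ : ClosedWalk V A src tgt → ℤ}

def Conn (src tgt : A → V) : Prop :=
  ∀ u w : V, Relation.ReflTransGen
    (fun p q => ∃ a : A, (src a = p ∧ tgt a = q) ∨ (src a = q ∧ tgt a = p)) u w

noncomputable def wk (src tgt : A → V) (hconn : Conn src tgt) (u w : V) : List (A × Bool) :=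
  (exists_walk hconn u w).choose

lemma wk_spec (hconn : Conn src tgt) (u w : V) :
    IsWalk src tgt u (wk src tgt hconn u w) w :=
  (exists_walk hconn u w).choose_spec

noncomputable def pot (src tgt : A → V) (hconn : Conn src tgt) (x₀ : A → ℤ) (v₀ : V)
    (x : A → ℤ) (v : V) : ℤ :=
  - wsum (fun a => x a - x₀ a) (wk src tgt hconn v₀ v)

variable (hconn : Conn src tgt) {x₀ : A → ℤ} (hx₀ : IsDeltaBond src tgt cl cu Δ x₀) (v₀ : V)

include hx₀

lemma pot_v₀ {x : A → ℤ} (hx : IsDeltaBond src tgt cl cu Δ x) :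
    pot src tgt hconn x₀ v₀ x v₀ = 0 := by
  unfold pot
  rw [wsum_sub, wsum_closed_eq hx hx₀ (wk_spec hconn v₀ v₀)]
  ring

lemma pot_tension {x : A → ℤ} (hx : IsDeltaBond src tgt cl cu Δ x) (a : A) :
    x a - x₀ a = pot src tgt hconn x₀ v₀ x (src a) - pot src tgt hconn x₀ v₀ x (tgt a) := by
  set g : A → ℤ := fun b => x b - x₀ b with hg
  set l1 := wk src tgt hconn v₀ (src a) with hl1
  set l2 := wk src tgt hconn v₀ (tgt a) with hl2
  have hwalk : IsWalk src tgt v₀ (l1 ++ (a, true) :: flipW l2) v₀ :=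
    isWalk_append _ _ _ _ _ (wk_spec hconn v₀ (src a))
      ⟨rfl, isWalk_flip _ _ _ (wk_spec hconn v₀ (tgt a))⟩
  have hz : wsum g (l1 ++ (a, true) :: flipW l2) = 0 := by
    rw [hg, wsum_sub, wsum_closed_eq hx hx₀ hwalk]; ring
  rw [wsum_append, wsum_cons, wsum_flip] at hz
  simp only [if_true] at hz
  show g a = _
  unfold pot
  rw [← hl1, ← hl2]
  linarith

omit hx₀ in
lemma pot_unique {x : A → ℤ} (π : V → ℤ) (h0 : π v₀ = 0)
    (ht : ∀ a, x a - x₀ a = π (src a) - π (tgt a)) :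
    π = pot src tgt hconn x₀ v₀ x := by
  funext v
  have := wsum_tel (fun a => x a - x₀ a) π ht (wk src tgt hconn v₀ v) v₀ v
    (wk_spec hconn v₀ v)
  unfold pot
  rw [this, h0]
  ring

def xof (src tgt : A → V) (x₀ : A → ℤ) (π : V → ℤ) : A → ℤ :=
  fun a => x₀ a + π (src a) - π (tgt a)

omit hx₀ in
lemma delta_xof (x₀ : A → ℤ) (π : V → ℤ) (C : ClosedWalk V A src tgt) :
    C.delta (xof src tgt x₀ π) = C.delta x₀ := by
  unfold ClosedWalk.delta
  have key : ∀ i ∈ Finset.range C.len,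
      (if C.dir i then xof src tgt x₀ π (C.arcs i) else - xof src tgt x₀ π (C.arcs i)) =
      (if C.dir i then x₀ (C.arcs i) else - x₀ (C.arcs i)) +
        (π (C.verts i) - π (C.verts (i + 1))) := by
    intro i hi
    have hc := C.compat i (Finset.mem_range.mp hi)
    cases hdir : C.dir i with
    | true =>
      obtain ⟨h1, h2⟩ := hc.1 hdir
      simp only [if_true, xof]
      rw [h1, h2]
      ring
    | false =>
      obtain ⟨h1, h2⟩ := hc.2 hdir
      simp only [Bool.false_eq_true, if_false, xof]
      rw [h1, h2]
      ring
  rw [Finset.sum_congr rfl key, Finset.sum_add_distrib,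
    Finset.sum_range_sub' (fun i => π (C.verts i)), ← C.closed]
  ring

def Feas (src tgt : A → V) (cl cu : A → ℤ) (x₀ : A → ℤ) (π : V → ℤ) : Prop :=
  ∀ a, cl a ≤ xof src tgt x₀ π a ∧ xof src tgt x₀ π a ≤ cu a

lemma bond_xof (π : V → ℤ) (hb : Feas src tgt cl cu x₀ π) :
    IsDeltaBond src tgt cl cu Δ (xof src tgt x₀ π) := by
  exact ⟨hb, fun C => (delta_xof x₀ π C).trans (hx₀.2 C)⟩

omit hx₀ in
lemma pot_xof (π : V → ℤ) (h0 : π v₀ = 0) (hb : Feas src tgt cl cu x₀ π) :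
    pot src tgt hconn x₀ v₀ (xof src tgt x₀ π) = π := by
  refine (pot_unique hconn v₀ π h0 fun a => ?_).symm
  unfold xof
  ring

omit hx₀

lemma feas_sup (π σ : V → ℤ) (hπ : Feas src tgt cl cu x₀ π) (hσ : Feas src tgt cl cu x₀ σ) :
    Feas src tgt cl cu x₀ (π ⊔ σ) := by
  intro a
  constructor
  · rcases le_total (π (tgt a)) (σ (tgt a)) with h | h
    · have e1 : (π ⊔ σ) (tgt a) = σ (tgt a) := sup_eq_right.mpr h
      have e2 : σ (src a) ≤ (π ⊔ σ) (src a) := le_sup_right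
      have h3 := (hσ a).1
      unfold xof at h3 ⊢
      rw [e1]; omega
    · have e1 : (π ⊔ σ) (tgt a) = π (tgt a) := sup_eq_left.mpr h
      have e2 : π (src a) ≤ (π ⊔ σ) (src a) := le_sup_left
      have h3 := (hπ a).1
      unfold xof at h3 ⊢
      rw [e1]; omega
  · rcases le_total (π (src a)) (σ (src a)) with h | h
    · have e1 : (π ⊔ σ) (src a) = σ (src a) := sup_eq_right.mpr h
      have e2 : σ (tgt a) ≤ (π ⊔ σ) (tgt a) := le_sup_right
      have h3 := (hσ a).2
      unfold xof at h3 ⊢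
      rw [e1]; omega
    · have e1 : (π ⊔ σ) (src a) = π (src a) := sup_eq_left.mpr h
      have e2 : π (tgt a) ≤ (π ⊔ σ) (tgt a) := le_sup_left
      have h3 := (hπ a).2
      unfold xof at h3 ⊢
      rw [e1]; omega

lemma feas_inf (π σ : V → ℤ) (hπ : Feas src tgt cl cu x₀ π) (hσ : Feas src tgt cl cu x₀ σ) :
    Feas src tgt cl cu x₀ (π ⊓ σ) := by
  intro a
  constructor
  · rcases le_total (π (src a)) (σ (src a)) with h | h
    · have e1 : (π ⊓ σ) (src a) = π (src a) := inf_eq_left.mpr h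
      have e2 : (π ⊓ σ) (tgt a) ≤ π (tgt a) := inf_le_left
      have h3 := (hπ a).1
      unfold xof at h3 ⊢
      rw [e1]; omega
    · have e1 : (π ⊓ σ) (src a) = σ (src a) := inf_eq_right.mpr h
      have e2 : (π ⊓ σ) (tgt a) ≤ σ (tgt a) := inf_le_right
      have h3 := (hσ a).1
      unfold xof at h3 ⊢
      rw [e1]; omega
  · rcases le_total (π (tgt a)) (σ (tgt a)) with h | h
    · have e1 : (π ⊓ σ) (tgt a) = π (tgt a) := inf_eq_left.mpr h
      have e2 : (π ⊓ σ) (src a) ≤ π (src a) := inf_le_left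
      have h3 := (hπ a).2
      unfold xof at h3 ⊢
      rw [e1]; omega
    · have e1 : (π ⊓ σ) (tgt a) = σ (tgt a) := inf_eq_right.mpr h
      have e2 : (π ⊓ σ) (src a) ≤ σ (src a) := inf_le_right
      have h3 := (hσ a).2
      unfold xof at h3 ⊢
      rw [e1]; omega

end Pot

section Steps

variable [DecidableEq V]
variable {src tgt : A → V} {cl cu : A → ℤ} {Δ : ClosedWalk V A src tgt → ℤ}
variable (hconn : Conn src tgt) {x₀ : A → ℤ} (hx₀ : IsDeltaBond src tgt cl cu Δ x₀) (v₀ : V)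

def ee (v : V) : V → ℤ := fun w => if w = v then 1 else 0

@[simp] lemma ee_self (v : V) : ee v v = 1 := if_pos rfl

lemma ee_nonneg (v w : V) : 0 ≤ ee v w := by unfold ee; split <;> omega

include hx₀

lemma bond_eq_xof {x : A → ℤ} (hx : IsDeltaBond src tgt cl cu Δ x) :
    x = xof src tgt x₀ (pot src tgt hconn x₀ v₀ x) := by
  funext a
  have := pot_tension hconn hx₀ v₀ hx a
  unfold xof
  omega

lemma pot_inj {x y : A → ℤ} (hx : IsDeltaBond src tgt cl cu Δ x)
    (hy : IsDeltaBond src tgt cl cu Δ y)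
    (h : pot src tgt hconn x₀ v₀ x = pot src tgt hconn x₀ v₀ y) : x = y := by
  rw [bond_eq_xof hconn hx₀ v₀ hx, bond_eq_xof hconn hx₀ v₀ hy, h]

lemma feas_pot {x : A → ℤ} (hx : IsDeltaBond src tgt cl cu Δ x) :
    Feas src tgt cl cu x₀ (pot src tgt hconn x₀ v₀ x) := by
  intro a
  have h1 := hx.1 a
  rwa [bond_eq_xof hconn hx₀ v₀ hx] at h1

lemma step_iff (s t : Bond src tgt cl cu Δ) (v : V) (hv : v ≠ v₀) :
    t.1 = pushSet src tgt (· = v) s.1 ↔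
    pot src tgt hconn x₀ v₀ t.1 = pot src tgt hconn x₀ v₀ s.1 + ee v := by
  constructor
  · intro h
    have h0 : (pot src tgt hconn x₀ v₀ s.1 + ee v) v₀ = 0 := by
      simp [Pi.add_apply, pot_v₀ hconn hx₀ v₀ s.2, ee, Ne.symm hv]
    refine (pot_unique hconn v₀ _ h0 fun a => ?_).symm
    have e2 := pot_tension hconn hx₀ v₀ s.2 a
    rw [h]
    simp only [pushSet, Pi.add_apply]
    by_cases h1 : src a = v <;> by_cases h2 : tgt a = v <;>
      simp [ee, h1, h2] at e2 ⊢ <;> omega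
  · intro h
    funext a
    have e1 := pot_tension hconn hx₀ v₀ t.2 a
    have e2 := pot_tension hconn hx₀ v₀ s.2 a
    rw [h] at e1
    simp only [Pi.add_apply] at e1
    simp only [pushSet]
    by_cases h1 : src a = v <;> by_cases h2 : tgt a = v <;>
      simp [ee, h1, h2] at e1 e2 ⊢ <;> omega

omit hx₀ in
lemma col_unique {p q : V → ℤ} {v w : V}
    (hv : q = p + ee v ∨ p = q + ee v) (hw : q = p + ee w ∨ p = q + ee w) : v = w := by
  rcases hv with hv | hv <;> rcases hw with hw | hw
  · by_contra hne
    have h1 := congrFun hv v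
    have h2 := congrFun hw v
    have : ee w v = 0 := by unfold ee; rw [if_neg (fun h => hne h)]
    simp [Pi.add_apply, this] at h1 h2
    omega
  · exfalso
    have h1 := congrFun hv v
    have h2 := congrFun hw v
    have e1 := ee_nonneg w v
    simp [Pi.add_apply] at h1 h2
    omega
  · exfalso
    have h1 := congrFun hv w
    have h2 := congrFun hw w
    have e1 := ee_nonneg v w
    simp [Pi.add_apply] at h1 h2
    omega
  · by_contra hne
    have h1 := congrFun hv v
    have h2 := congrFun hw v
    have : ee w v = 0 := by unfold ee; rw [if_neg (fun h => hne h)]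
    simp [Pi.add_apply, this] at h1 h2
    omega

noncomputable def colF (src tgt : A → V) (cl cu : A → ℤ) (Δ : ClosedWalk V A src tgt → ℤ)
    (hconn : Conn src tgt) (x₀ : A → ℤ) (v₀ : V) (s t : Bond src tgt cl cu Δ) : V :=
  @dite _ (∃ v, v ≠ v₀ ∧ (pot src tgt hconn x₀ v₀ t.1 = pot src tgt hconn x₀ v₀ s.1 + ee v ∨
      pot src tgt hconn x₀ v₀ s.1 = pot src tgt hconn x₀ v₀ t.1 + ee v))
    (Classical.propDecidable _) (fun h => h.choose) (fun _ => v₀)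

omit hx₀ in
lemma colF_eq (s t : Bond src tgt cl cu Δ) (v : V) (hv : v ≠ v₀)
    (h : pot src tgt hconn x₀ v₀ t.1 = pot src tgt hconn x₀ v₀ s.1 + ee v ∨
      pot src tgt hconn x₀ v₀ s.1 = pot src tgt hconn x₀ v₀ t.1 + ee v) :
    colF src tgt cl cu Δ hconn x₀ v₀ s t = v := by
  have hex : ∃ w, w ≠ v₀ ∧ (pot src tgt hconn x₀ v₀ t.1 = pot src tgt hconn x₀ v₀ s.1 + ee w ∨
      pot src tgt hconn x₀ v₀ s.1 = pot src tgt hconn x₀ v₀ t.1 + ee w) := ⟨v, hv, h⟩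
  unfold colF
  rw [dif_pos hex]
  exact col_unique hex.choose_spec.2 h

end Steps

section Reach

variable [DecidableEq V] [Fintype V] [Fintype A]
variable {src tgt : A → V} {cl cu : A → ℤ} {Δ : ClosedWalk V A src tgt → ℤ}
variable (hconn : Conn src tgt) {x₀ : A → ℤ} (hx₀ : IsDeltaBond src tgt cl cu Δ x₀) (v₀ : V)

include hx₀

lemma exists_push_vertex
    (hnorigid : ∀ a : A, ∃ y z : A → ℤ, IsDeltaBond src tgt cl cu Δ y ∧
      IsDeltaBond src tgt cl cu Δ z ∧ y a ≠ z a)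
    (s t : Bond src tgt cl cu Δ)
    (hle : pot src tgt hconn x₀ v₀ s.1 ≤ pot src tgt hconn x₀ v₀ t.1)
    (hne : pot src tgt hconn x₀ v₀ s.1 ≠ pot src tgt hconn x₀ v₀ t.1) :
    ∃ v, pot src tgt hconn x₀ v₀ s.1 v < pot src tgt hconn x₀ v₀ t.1 v ∧
      Feas src tgt cl cu x₀ (pot src tgt hconn x₀ v₀ s.1 + ee v) := by
  set p := pot src tgt hconn x₀ v₀ s.1 with hp
  set q := pot src tgt hconn x₀ v₀ t.1 with hq
  have hFp : Feas src tgt cl cu x₀ p := feas_pot hconn hx₀ v₀ s.2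
  have hFq : Feas src tgt cl cu x₀ q := feas_pot hconn hx₀ v₀ t.2
  have hsx : s.1 = xof src tgt x₀ p := bond_eq_xof hconn hx₀ v₀ s.2
  by_contra hcon
  push_neg at hcon
  -- every improvable vertex has a blocking tight arc
  have hblock : ∀ v : V, p v < q v →
      ∃ a, (src a = v ∧ tgt a ≠ v ∧ xof src tgt x₀ p a = cu a) ∨
        (tgt a = v ∧ src a ≠ v ∧ xof src tgt x₀ p a = cl a) := by
    intro v hv
    have hnf := hcon v hv
    obtain ⟨a, ha⟩ := not_forall.mp hnf
    refine ⟨a, ?_⟩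
    have hx1 : xof src tgt x₀ (p + ee v) a
        = xof src tgt x₀ p a + ee v (src a) - ee v (tgt a) := by
      unfold xof; simp only [Pi.add_apply]; ring
    have hFpa := hFp a
    by_cases h1 : src a = v <;> by_cases h2 : tgt a = v
    · exfalso; apply ha; rw [hx1]; simp only [ee, h1, h2, if_pos rfl]
      constructor <;> omega
    · left
      refine ⟨h1, h2, ?_⟩
      by_contra hne2
      apply ha; rw [hx1]
      simp [ee, h1, h2]
      constructor <;> omega
    · right
      refine ⟨h2, h1, ?_⟩
      by_contra hne2
      apply ha; rw [hx1]
      simp [ee, h1, h2]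
      constructor <;> omega
    · exfalso; apply ha; rw [hx1]; simp only [ee, h1, h2, if_neg h1, if_neg h2]
      constructor <;> omega
  have hMne : ∃ v, p v < q v := by
    by_contra h
    push_neg at h
    exact hne (funext fun v => le_antisymm (hle v) (h v))
  obtain ⟨v1, hv1⟩ := hMne
  -- build the chain of tight arcs
  have key : ∀ v : {v : V // p v < q v}, ∃ (w : {v : V // p v < q v}) (a : A) (b : Bool),
      (b = true → src a = v.1 ∧ tgt a = w.1 ∧ xof src tgt x₀ p a = cu a) ∧
      (b = false → tgt a = v.1 ∧ src a = w.1 ∧ xof src tgt x₀ p a = cl a) := by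
    rintro ⟨v, hv⟩
    obtain ⟨a, hcase⟩ := hblock v hv
    rcases hcase with ⟨h1, h2, h3⟩ | ⟨h1, h2, h3⟩
    · have hq2 := (hFq a).2
      have hwM : p (tgt a) < q (tgt a) := by
        unfold xof at h3 hq2
        rw [h1] at h3 hq2
        omega
      exact ⟨⟨tgt a, hwM⟩, a, true, fun _ => ⟨h1, rfl, h3⟩, fun hb => by simp at hb⟩
    · have hq1 := (hFq a).1
      have hwM : p (src a) < q (src a) := by
        unfold xof at h3 hq1
        rw [h1] at h3 hq1
        omega
      exact ⟨⟨src a, hwM⟩, a, false, fun hb => by simp at hb, fun _ => ⟨h1, rfl, h3⟩⟩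
  choose step arc sd hT hF using key
  set u : ℕ → {v : V // p v < q v} := fun n => step^[n] ⟨v1, hv1⟩ with hudef
  have hu : ∀ n, u (n + 1) = step (u n) := fun n => Function.iterate_succ_apply' step n _
  obtain ⟨j0, k0, hjk, hjkeq⟩ := Finite.exists_ne_map_eq_of_infinite u
  obtain ⟨j, k, hlt, heq⟩ : ∃ j k, j < k ∧ u j = u k := by
    rcases lt_or_gt_of_ne hjk with h | h
    exacts [⟨j0, k0, h, hjkeq⟩, ⟨k0, j0, h, hjkeq.symm⟩]
  -- slack function
  have slack_eq : ∀ (y : A → ℤ), IsDeltaBond src tgt cl cu Δ y → ∀ n : ℕ,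
      (if sd (u n) then cu (arc (u n)) - y (arc (u n)) else y (arc (u n)) - cl (arc (u n)))
      = (if sd (u n) then cu (arc (u n)) - x₀ (arc (u n)) else x₀ (arc (u n)) - cl (arc (u n)))
        + (pot src tgt hconn x₀ v₀ y (u (n + 1)).1 - pot src tgt hconn x₀ v₀ y (u n).1) := by
    intro y hy n
    have hten := pot_tension hconn hx₀ v₀ hy (arc (u n))
    cases hsd : sd (u n) with
    | true =>
      obtain ⟨e1, e2, _⟩ := hT (u n) hsd
      rw [hu n]
      simp only [if_true]
      rw [e1, e2] at hten
      omega
    | false =>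
      obtain ⟨e1, e2, _⟩ := hF (u n) hsd
      rw [hu n]
      simp only [Bool.false_eq_true, if_false]
      rw [e1, e2] at hten
      omega
  have slack_nonneg : ∀ (y : A → ℤ), IsDeltaBond src tgt cl cu Δ y → ∀ n : ℕ,
      0 ≤ (if sd (u n) then cu (arc (u n)) - y (arc (u n))
        else y (arc (u n)) - cl (arc (u n))) := by
    intro y hy n
    have := hy.1 (arc (u n))
    split <;> omega
  have slack_s : ∀ n : ℕ,
      (if sd (u n) then cu (arc (u n)) - s.1 (arc (u n))
        else s.1 (arc (u n)) - cl (arc (u n))) = 0 := by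
    intro n
    cases hsd : sd (u n) with
    | true =>
      obtain ⟨_, _, e3⟩ := hT (u n) hsd
      simp only [if_true]
      rw [hsx]
      omega
    | false =>
      obtain ⟨_, _, e3⟩ := hF (u n) hsd
      simp only [Bool.false_eq_true, if_false]
      rw [hsx]
      omega
  -- telescoping sum
  have tele : ∀ (y : A → ℤ), IsDeltaBond src tgt cl cu Δ y →
      (∑ i ∈ Finset.range (k - j),
        (if sd (u (j + i)) then cu (arc (u (j + i))) - y (arc (u (j + i)))
          else y (arc (u (j + i))) - cl (arc (u (j + i)))))
      = (∑ i ∈ Finset.range (k - j),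
          (if sd (u (j + i)) then cu (arc (u (j + i))) - x₀ (arc (u (j + i)))
            else x₀ (arc (u (j + i))) - cl (arc (u (j + i))))) := by
    intro y hy
    have h1 : ∀ i ∈ Finset.range (k - j),
        (if sd (u (j + i)) then cu (arc (u (j + i))) - y (arc (u (j + i)))
          else y (arc (u (j + i))) - cl (arc (u (j + i))))
        = (if sd (u (j + i)) then cu (arc (u (j + i))) - x₀ (arc (u (j + i)))
            else x₀ (arc (u (j + i))) - cl (arc (u (j + i))))
          + ((fun i => pot src tgt hconn x₀ v₀ y (u (j + i)).1) (i + 1)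
            - (fun i => pot src tgt hconn x₀ v₀ y (u (j + i)).1) i) := by
      intro i _
      exact slack_eq y hy (j + i)
    rw [Finset.sum_congr rfl h1, Finset.sum_add_distrib,
      Finset.sum_range_sub (fun i => pot src tgt hconn x₀ v₀ y (u (j + i)).1) (k - j)]
    have hjj : j + (k - j) = k := by omega
    rw [hjj, ← heq]
    simp only [Nat.add_zero]
    omega
  -- conclusion: the first tight arc of the cycle is rigid
  have kk_zero : (∑ i ∈ Finset.range (k - j),
      (if sd (u (j + i)) then cu (arc (u (j + i))) - x₀ (arc (u (j + i)))
        else x₀ (arc (u (j + i))) - cl (arc (u (j + i))))) = 0 := by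
    rw [← tele s.1 s.2]
    exact Finset.sum_eq_zero fun i _ => slack_s (j + i)
  have rigid : ∀ (y : A → ℤ), IsDeltaBond src tgt cl cu Δ y →
      (if sd (u j) then cu (arc (u j)) - y (arc (u j))
        else y (arc (u j)) - cl (arc (u j))) = 0 := by
    intro y hy
    have hsum : (∑ i ∈ Finset.range (k - j),
        (if sd (u (j + i)) then cu (arc (u (j + i))) - y (arc (u (j + i)))
          else y (arc (u (j + i))) - cl (arc (u (j + i))))) = 0 := by
      rw [tele y hy]; exact kk_zero
    have h0mem : 0 ∈ Finset.range (k - j) := by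
      simp [Finset.mem_range]; omega
    have := (Finset.sum_eq_zero_iff_of_nonneg
      (fun i _ => slack_nonneg y hy (j + i))).mp hsum 0 h0mem
    simpa using this
  obtain ⟨y, z, hy, hz, hyz⟩ := hnorigid (arc (u j))
  have r1 := rigid y hy
  have r2 := rigid z hz
  apply hyz
  rcases hsd : sd (u j) with h | h <;> rw [hsd] at r1 r2 <;> simp at r1 r2 <;> omega

lemma reach_of_le
    (hnorigid : ∀ a : A, ∃ y z : A → ℤ, IsDeltaBond src tgt cl cu Δ y ∧
      IsDeltaBond src tgt cl cu Δ z ∧ y a ≠ z a)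
    (s t : Bond src tgt cl cu Δ)
    (hle : pot src tgt hconn x₀ v₀ s.1 ≤ pot src tgt hconn x₀ v₀ t.1) :
    Relation.ReflTransGen (PushStep src tgt cl cu Δ v₀) s t := by
  have main : ∀ N : ℕ, ∀ s t : Bond src tgt cl cu Δ,
      pot src tgt hconn x₀ v₀ s.1 ≤ pot src tgt hconn x₀ v₀ t.1 →
      (∑ v : V, (pot src tgt hconn x₀ v₀ t.1 v - pot src tgt hconn x₀ v₀ s.1 v)) ≤ N →
      Relation.ReflTransGen (PushStep src tgt cl cu Δ v₀) s t := by
    intro N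
    induction N with
    | zero =>
      intro s t hle hN
      have hsum0 : (∑ v : V,
          (pot src tgt hconn x₀ v₀ t.1 v - pot src tgt hconn x₀ v₀ s.1 v)) = 0 :=
        le_antisymm (by exact_mod_cast hN)
          (Finset.sum_nonneg fun v _ => by
            have hlv : pot src tgt hconn x₀ v₀ s.1 v ≤ pot src tgt hconn x₀ v₀ t.1 v := hle v
            omega)
      have hz := (Finset.sum_eq_zero_iff_of_nonneg
        (fun v _ => by
          have hlv : pot src tgt hconn x₀ v₀ s.1 v ≤ pot src tgt hconn x₀ v₀ t.1 v := hle v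
          omega)).mp hsum0
      have hpeq : pot src tgt hconn x₀ v₀ s.1 = pot src tgt hconn x₀ v₀ t.1 := by
        funext v
        have := hz v (Finset.mem_univ v)
        omega
      have : s = t := Subtype.ext (pot_inj hconn hx₀ v₀ s.2 t.2 hpeq)
      rw [this]
    | succ N ih =>
      intro s t hle hN
      by_cases hpeq : pot src tgt hconn x₀ v₀ s.1 = pot src tgt hconn x₀ v₀ t.1
      · have : s = t := Subtype.ext (pot_inj hconn hx₀ v₀ s.2 t.2 hpeq)
        rw [this]
      · obtain ⟨v, hv, hfeas⟩ := exists_push_vertex hconn hx₀ v₀ hnorigid s t hle hpeq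
        have hv₀ : v ≠ v₀ := by
          intro hcontra
          have h1 := pot_v₀ hconn hx₀ v₀ s.2
          have h2 := pot_v₀ hconn hx₀ v₀ t.2
          rw [hcontra] at hv
          omega
        have h0 : (pot src tgt hconn x₀ v₀ s.1 + ee v) v₀ = 0 := by
          have h1 := pot_v₀ hconn hx₀ v₀ s.2
          have h2 : ee v v₀ = 0 := by unfold ee; rw [if_neg (Ne.symm hv₀)]
          simp [Pi.add_apply, h1, h2]
        let s' : Bond src tgt cl cu Δ :=
          ⟨xof src tgt x₀ (pot src tgt hconn x₀ v₀ s.1 + ee v), bond_xof hx₀ _ hfeas⟩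
        have hps' : pot src tgt hconn x₀ v₀ s'.1 = pot src tgt hconn x₀ v₀ s.1 + ee v :=
          pot_xof hconn v₀ _ h0 hfeas
        have hstep : PushStep src tgt cl cu Δ v₀ s s' :=
          ⟨v, hv₀, (step_iff hconn hx₀ v₀ s s' v hv₀).mpr hps'⟩
        have hle' : pot src tgt hconn x₀ v₀ s'.1 ≤ pot src tgt hconn x₀ v₀ t.1 := by
          rw [hps']
          intro w
          simp only [Pi.add_apply]
          by_cases hw : w = v
          · subst hw; simp [ee]; omega
          · have he0 : ee v w = 0 := by unfold ee; rw [if_neg hw]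
            have hlw : pot src tgt hconn x₀ v₀ s.1 w ≤ pot src tgt hconn x₀ v₀ t.1 w := hle w
            omega
        have hsum' : (∑ w : V,
            (pot src tgt hconn x₀ v₀ t.1 w - pot src tgt hconn x₀ v₀ s'.1 w)) ≤ N := by
          rw [hps']
          have hone : (∑ w : V, ee v w) = 1 := by
            unfold ee
            rw [Finset.sum_ite_eq' Finset.univ v (fun _ => (1 : ℤ))]
            simp
          have hsplit : (∑ w : V,
              (pot src tgt hconn x₀ v₀ t.1 w - (pot src tgt hconn x₀ v₀ s.1 + ee v) w))
              = (∑ w : V, (pot src tgt hconn x₀ v₀ t.1 w - pot src tgt hconn x₀ v₀ s.1 w))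
                - (∑ w : V, ee v w) := by
            rw [← Finset.sum_sub_distrib]
            exact Finset.sum_congr rfl fun w _ => by simp [Pi.add_apply]; ring
          rw [hsplit, hone]
          omega
        exact Relation.ReflTransGen.head hstep (ih s' t hle' hsum')
  refine main (∑ v : V, (pot src tgt hconn x₀ v₀ t.1 v - pot src tgt hconn x₀ v₀ s.1 v)).toNat
    s t hle ?_
  exact Int.self_le_toNat _

end Reach

section EE

variable [DecidableEq V]

lemma sup_ee {p : V → ℤ} {v w : V} (hvw : v ≠ w) :
    (p + ee v) ⊔ (p + ee w) = p + ee v + ee w := by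
  funext u
  simp only [Pi.sup_apply, Pi.add_apply]
  by_cases h1 : u = v
  · have e1 : ee v u = 1 := by unfold ee; rw [if_pos h1]
    have e2 : ee w u = 0 := by unfold ee; rw [if_neg (by rw [h1]; exact hvw)]
    rw [e1, e2, add_zero, add_zero]
    exact sup_eq_left.mpr (by omega)
  · by_cases h2 : u = w
    · have e1 : ee v u = 0 := by unfold ee; rw [if_neg h1]
      have e2 : ee w u = 1 := by unfold ee; rw [if_pos h2]
      rw [e1, e2, add_zero]
      exact sup_eq_right.mpr (by omega)
    · have e1 : ee v u = 0 := by unfold ee; rw [if_neg h1]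
      have e2 : ee w u = 0 := by unfold ee; rw [if_neg h2]
      rw [e1, e2]
      simp

lemma inf_ee {p : V → ℤ} {v w : V} (hvw : v ≠ w) :
    (p - ee v) ⊓ (p - ee w) = p - ee v - ee w := by
  funext u
  simp only [Pi.inf_apply, Pi.sub_apply]
  by_cases h1 : u = v
  · have e1 : ee v u = 1 := by unfold ee; rw [if_pos h1]
    have e2 : ee w u = 0 := by unfold ee; rw [if_neg (by rw [h1]; exact hvw)]
    rw [e1, e2, sub_zero, sub_zero]
    exact inf_eq_left.mpr (by omega)
  · by_cases h2 : u = w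
    · have e1 : ee v u = 0 := by unfold ee; rw [if_neg h1]
      have e2 : ee w u = 1 := by unfold ee; rw [if_pos h2]
      rw [e1, e2, sub_zero]
      exact inf_eq_right.mpr (by omega)
    · have e1 : ee v u = 0 := by unfold ee; rw [if_neg h1]
      have e2 : ee w u = 0 := by unfold ee; rw [if_neg h2]
      rw [e1, e2]
      simp

end EE

end Stmt15

/-- With reduced data and forbidden vertex `v₀`, coloring each legal
single-vertex push between Δ-bonds by the pushed vertex is simultaneously a
U-coloring and an L-coloring, the push digraph is connected, and consequently
the Δ-bonds ordered by push-reachability form a distributive lattice. -/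
theorem stmt_15 {V A : Type} [Fintype V] [Fintype A] [DecidableEq V]
    (src tgt : A → V) (cl cu : A → ℤ) (Δ : ClosedWalk V A src tgt → ℤ)
    (hconn : ∀ u w : V, Relation.ReflTransGen
      (fun p q => ∃ a : A, (src a = p ∧ tgt a = q) ∨ (src a = q ∧ tgt a = p)) u w)
    (hnorigid : ∀ a : A, ∃ y z : A → ℤ, IsDeltaBond src tgt cl cu Δ y ∧
      IsDeltaBond src tgt cl cu Δ z ∧ y a ≠ z a)
    (hnonempty : ∃ x : A → ℤ, IsDeltaBond src tgt cl cu Δ x)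
    (v₀ : V) :
    ∃ col : Bond src tgt cl cu Δ → Bond src tgt cl cu Δ → V,
      (∀ s t : Bond src tgt cl cu Δ, PushStep src tgt cl cu Δ v₀ s t →
        col s t ≠ v₀ ∧ t.1 = pushSet src tgt (· = col s t) s.1) ∧
      UColoring (PushStep src tgt cl cu Δ v₀) col ∧
      UColoring (fun s t => PushStep src tgt cl cu Δ v₀ t s) col ∧
      (∀ s t : Bond src tgt cl cu Δ, Relation.ReflTransGen
        (fun a b => PushStep src tgt cl cu Δ v₀ a b ∨ PushStep src tgt cl cu Δ v₀ b a) s t) ∧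
      ∃ (L : Type) (_ : DistribLattice L) (f : Bond src tgt cl cu Δ → L),
        Function.Bijective f ∧
        (∀ s t : Bond src tgt cl cu Δ,
          Relation.ReflTransGen (PushStep src tgt cl cu Δ v₀) s t ↔ f s ≤ f t) := by
  classical
  obtain ⟨x₀, hx₀⟩ := hnonempty
  have hc : Stmt15.Conn src tgt := hconn
  have potinj : ∀ s t : Bond src tgt cl cu Δ,
      Stmt15.pot src tgt hc x₀ v₀ s.1 = Stmt15.pot src tgt hc x₀ v₀ t.1 → s = t :=
    fun s t h => Subtype.ext (Stmt15.pot_inj hc hx₀ v₀ s.2 t.2 h)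
  have pot0 : ∀ s : Bond src tgt cl cu Δ, Stmt15.pot src tgt hc x₀ v₀ s.1 v₀ = 0 :=
    fun s => Stmt15.pot_v₀ hc hx₀ v₀ s.2
  refine ⟨Stmt15.colF src tgt cl cu Δ hc x₀ v₀, ?_, ⟨?_, ?_⟩, ⟨?_, ?_⟩, ?_, ?_⟩
  · -- the coloring records the pushed vertex
    rintro s t ⟨v, hv, hpush⟩
    have hpot := (Stmt15.step_iff hc hx₀ v₀ s t v hv).mp hpush
    rw [Stmt15.colF_eq hc v₀ s t v hv (Or.inl hpot)]
    exact ⟨hv, hpush⟩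
  · -- (U1) for the push digraph
    rintro s t t' ⟨v, hv, hpush⟩ ⟨v', hv', hpush'⟩ hne hceq
    have hr1 := (Stmt15.step_iff hc hx₀ v₀ s t v hv).mp hpush
    have hr2 := (Stmt15.step_iff hc hx₀ v₀ s t' v' hv').mp hpush'
    rw [Stmt15.colF_eq hc v₀ s t v hv (Or.inl hr1),
      Stmt15.colF_eq hc v₀ s t' v' hv' (Or.inl hr2)] at hceq
    exact hne (potinj t t' (by rw [hr1, hr2, hceq]))
  · -- (U2) for the push digraph
    rintro s t t' ⟨v, hv, hpush⟩ ⟨v', hv', hpush'⟩ hne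
    have hr1 := (Stmt15.step_iff hc hx₀ v₀ s t v hv).mp hpush
    have hr2 := (Stmt15.step_iff hc hx₀ v₀ s t' v' hv').mp hpush'
    have hvv' : v ≠ v' := fun hveq => hne (potinj t t' (by rw [hr1, hr2, hveq]))
    have hfeas : Stmt15.Feas src tgt cl cu x₀
        (Stmt15.pot src tgt hc x₀ v₀ t.1 ⊔ Stmt15.pot src tgt hc x₀ v₀ t'.1) :=
      Stmt15.feas_sup _ _ (Stmt15.feas_pot hc hx₀ v₀ t.2) (Stmt15.feas_pot hc hx₀ v₀ t'.2)
    have h0 : (Stmt15.pot src tgt hc x₀ v₀ t.1 ⊔ Stmt15.pot src tgt hc x₀ v₀ t'.1) v₀ = 0 := by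
      simp only [Pi.sup_apply, pot0 t, pot0 t']
      simp
    set z : Bond src tgt cl cu Δ :=
      ⟨Stmt15.xof src tgt x₀ (Stmt15.pot src tgt hc x₀ v₀ t.1 ⊔ Stmt15.pot src tgt hc x₀ v₀ t'.1),
        Stmt15.bond_xof hx₀ _ hfeas⟩ with hzdef
    have hpz : Stmt15.pot src tgt hc x₀ v₀ z.1
        = Stmt15.pot src tgt hc x₀ v₀ t.1 ⊔ Stmt15.pot src tgt hc x₀ v₀ t'.1 :=
      Stmt15.pot_xof hc v₀ _ h0 hfeas
    have hsup : Stmt15.pot src tgt hc x₀ v₀ t.1 ⊔ Stmt15.pot src tgt hc x₀ v₀ t'.1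
        = Stmt15.pot src tgt hc x₀ v₀ s.1 + Stmt15.ee v + Stmt15.ee v' := by
      rw [hr1, hr2]
      exact Stmt15.sup_ee hvv'
    have hzt : Stmt15.pot src tgt hc x₀ v₀ z.1 = Stmt15.pot src tgt hc x₀ v₀ t.1 + Stmt15.ee v' := by
      rw [hpz, hsup, hr1]
    have hzt' : Stmt15.pot src tgt hc x₀ v₀ z.1
        = Stmt15.pot src tgt hc x₀ v₀ t'.1 + Stmt15.ee v := by
      rw [hpz, hsup, hr2]
      ring
    refine ⟨z, ⟨v', hv', (Stmt15.step_iff hc hx₀ v₀ t z v' hv').mpr hzt⟩,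
      ⟨v, hv, (Stmt15.step_iff hc hx₀ v₀ t' z v hv).mpr hzt'⟩, ?_, ?_⟩
    · rw [Stmt15.colF_eq hc v₀ s t v hv (Or.inl hr1),
        Stmt15.colF_eq hc v₀ t' z v hv (Or.inl hzt')]
    · rw [Stmt15.colF_eq hc v₀ s t' v' hv' (Or.inl hr2),
        Stmt15.colF_eq hc v₀ t z v' hv' (Or.inl hzt)]
  · -- (U1) for the reversed push digraph
    rintro s t t' ⟨v, hv, hpush⟩ ⟨v', hv', hpush'⟩ hne hceq
    have hr1 := (Stmt15.step_iff hc hx₀ v₀ t s v hv).mp hpush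
    have hr2 := (Stmt15.step_iff hc hx₀ v₀ t' s v' hv').mp hpush'
    rw [Stmt15.colF_eq hc v₀ s t v hv (Or.inr hr1),
      Stmt15.colF_eq hc v₀ s t' v' hv' (Or.inr hr2)] at hceq
    refine hne (potinj t t' ?_)
    have := hr1.symm.trans hr2
    rw [hceq] at this
    exact add_right_cancel this
  · -- (U2) for the reversed push digraph
    rintro s t t' ⟨v, hv, hpush⟩ ⟨v', hv', hpush'⟩ hne
    have hr1 := (Stmt15.step_iff hc hx₀ v₀ t s v hv).mp hpush
    have hr2 := (Stmt15.step_iff hc hx₀ v₀ t' s v' hv').mp hpush'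
    have hvv' : v ≠ v' := by
      intro hveq
      refine hne (potinj t t' ?_)
      have := hr1.symm.trans hr2
      rw [hveq] at this
      exact add_right_cancel this
    have ht1 : Stmt15.pot src tgt hc x₀ v₀ t.1
        = Stmt15.pot src tgt hc x₀ v₀ s.1 - Stmt15.ee v := by rw [hr1]; ring
    have ht2 : Stmt15.pot src tgt hc x₀ v₀ t'.1
        = Stmt15.pot src tgt hc x₀ v₀ s.1 - Stmt15.ee v' := by rw [hr2]; ring
    have hfeas : Stmt15.Feas src tgt cl cu x₀
        (Stmt15.pot src tgt hc x₀ v₀ t.1 ⊓ Stmt15.pot src tgt hc x₀ v₀ t'.1) :=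
      Stmt15.feas_inf _ _ (Stmt15.feas_pot hc hx₀ v₀ t.2) (Stmt15.feas_pot hc hx₀ v₀ t'.2)
    have h0 : (Stmt15.pot src tgt hc x₀ v₀ t.1 ⊓ Stmt15.pot src tgt hc x₀ v₀ t'.1) v₀ = 0 := by
      simp only [Pi.inf_apply, pot0 t, pot0 t']
      simp
    set z : Bond src tgt cl cu Δ :=
      ⟨Stmt15.xof src tgt x₀ (Stmt15.pot src tgt hc x₀ v₀ t.1 ⊓ Stmt15.pot src tgt hc x₀ v₀ t'.1),
        Stmt15.bond_xof hx₀ _ hfeas⟩ with hzdef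
    have hpz : Stmt15.pot src tgt hc x₀ v₀ z.1
        = Stmt15.pot src tgt hc x₀ v₀ t.1 ⊓ Stmt15.pot src tgt hc x₀ v₀ t'.1 :=
      Stmt15.pot_xof hc v₀ _ h0 hfeas
    have hinf : Stmt15.pot src tgt hc x₀ v₀ t.1 ⊓ Stmt15.pot src tgt hc x₀ v₀ t'.1
        = Stmt15.pot src tgt hc x₀ v₀ s.1 - Stmt15.ee v - Stmt15.ee v' := by
      rw [ht1, ht2]
      exact Stmt15.inf_ee hvv'
    have hzt : Stmt15.pot src tgt hc x₀ v₀ t.1 = Stmt15.pot src tgt hc x₀ v₀ z.1 + Stmt15.ee v' := by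
      rw [hpz, hinf, ht1]; ring
    have hzt' : Stmt15.pot src tgt hc x₀ v₀ t'.1
        = Stmt15.pot src tgt hc x₀ v₀ z.1 + Stmt15.ee v := by
      rw [hpz, hinf, ht2]; ring
    refine ⟨z, ⟨v', hv', (Stmt15.step_iff hc hx₀ v₀ z t v' hv').mpr hzt⟩,
      ⟨v, hv, (Stmt15.step_iff hc hx₀ v₀ z t' v hv).mpr hzt'⟩, ?_, ?_⟩
    · rw [Stmt15.colF_eq hc v₀ s t v hv (Or.inr hr1),
        Stmt15.colF_eq hc v₀ t' z v hv (Or.inr hzt')]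
    · rw [Stmt15.colF_eq hc v₀ s t' v' hv' (Or.inr hr2),
        Stmt15.colF_eq hc v₀ t z v' hv' (Or.inr hzt)]
  · -- connectivity of the push order
    intro s t
    have hfeas : Stmt15.Feas src tgt cl cu x₀
        (Stmt15.pot src tgt hc x₀ v₀ s.1 ⊔ Stmt15.pot src tgt hc x₀ v₀ t.1) :=
      Stmt15.feas_sup _ _ (Stmt15.feas_pot hc hx₀ v₀ s.2) (Stmt15.feas_pot hc hx₀ v₀ t.2)
    have h0 : (Stmt15.pot src tgt hc x₀ v₀ s.1 ⊔ Stmt15.pot src tgt hc x₀ v₀ t.1) v₀ = 0 := by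
      simp only [Pi.sup_apply, pot0 s, pot0 t]
      simp
    set z : Bond src tgt cl cu Δ :=
      ⟨Stmt15.xof src tgt x₀ (Stmt15.pot src tgt hc x₀ v₀ s.1 ⊔ Stmt15.pot src tgt hc x₀ v₀ t.1),
        Stmt15.bond_xof hx₀ _ hfeas⟩ with hzdef
    have hpz : Stmt15.pot src tgt hc x₀ v₀ z.1
        = Stmt15.pot src tgt hc x₀ v₀ s.1 ⊔ Stmt15.pot src tgt hc x₀ v₀ t.1 :=
      Stmt15.pot_xof hc v₀ _ h0 hfeas
    have hsz : Relation.ReflTransGen (PushStep src tgt cl cu Δ v₀) s z :=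
      Stmt15.reach_of_le hc hx₀ v₀ hnorigid s z (by rw [hpz]; exact le_sup_left)
    have htz : Relation.ReflTransGen (PushStep src tgt cl cu Δ v₀) t z :=
      Stmt15.reach_of_le hc hx₀ v₀ hnorigid t z (by rw [hpz]; exact le_sup_right)
    have hmono : ∀ a b : Bond src tgt cl cu Δ,
        Relation.ReflTransGen (PushStep src tgt cl cu Δ v₀) a b →
        Relation.ReflTransGen
          (fun a b => PushStep src tgt cl cu Δ v₀ a b ∨ PushStep src tgt cl cu Δ v₀ b a) a b :=
      fun a b h => Relation.ReflTransGen.mono (fun _ _ h' => Or.inl h') a b h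
    have hsymm : Symmetric
        (fun a b : Bond src tgt cl cu Δ =>
          PushStep src tgt cl cu Δ v₀ a b ∨ PushStep src tgt cl cu Δ v₀ b a) :=
      fun a b h => h.symm
    exact (hmono s z hsz).trans ((@Relation.ReflTransGen.symmetric _ _ ⟨hsymm⟩).symm _ _ (hmono t z htz))
  · -- the distributive lattice of Δ-bonds
    letI instMax : Max {π : V → ℤ // π v₀ = 0 ∧ Stmt15.Feas src tgt cl cu x₀ π} :=
      ⟨fun a b => ⟨a.1 ⊔ b.1, by simp [Pi.sup_apply, a.2.1, b.2.1],
        Stmt15.feas_sup _ _ a.2.2 b.2.2⟩⟩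
    letI instMin : Min {π : V → ℤ // π v₀ = 0 ∧ Stmt15.Feas src tgt cl cu x₀ π} :=
      ⟨fun a b => ⟨a.1 ⊓ b.1, by simp [Pi.inf_apply, a.2.1, b.2.1],
        Stmt15.feas_inf _ _ a.2.2 b.2.2⟩⟩
    letI instL : DistribLattice {π : V → ℤ // π v₀ = 0 ∧ Stmt15.Feas src tgt cl cu x₀ π} :=
      Function.Injective.distribLattice Subtype.val Subtype.val_injective
        Iff.rfl Iff.rfl (fun _ _ => rfl) (fun _ _ => rfl)
    refine ⟨{π : V → ℤ // π v₀ = 0 ∧ Stmt15.Feas src tgt cl cu x₀ π}, instL,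
      fun s => ⟨Stmt15.pot src tgt hc x₀ v₀ s.1, pot0 s, Stmt15.feas_pot hc hx₀ v₀ s.2⟩,
      ⟨?_, ?_⟩, ?_⟩
    · intro s t h
      exact potinj s t (congrArg Subtype.val h)
    · rintro ⟨π, h0, hf⟩
      exact ⟨⟨Stmt15.xof src tgt x₀ π, Stmt15.bond_xof hx₀ π hf⟩,
        Subtype.ext (Stmt15.pot_xof hc v₀ π h0 hf)⟩
    · intro s t
      constructor
      · intro h
        induction h with
        | refl => exact le_refl _
        | @tail b c hab hbc ih =>
          obtain ⟨v, hv, hpush⟩ := hbc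
          have hr := (Stmt15.step_iff hc hx₀ v₀ b c v hv).mp hpush
          have hstep : Stmt15.pot src tgt hc x₀ v₀ b.1 ≤ Stmt15.pot src tgt hc x₀ v₀ c.1 := by
            rw [hr]
            intro w
            have := Stmt15.ee_nonneg v w
            simp only [Pi.add_apply]
            omega
          exact le_trans ih hstep
      · intro h
        exact Stmt15.reach_of_le hc hx₀ v₀ hnorigid s t h
end

section
/- In a finite chip-firing game on a digraph D starting from σ_0, the game has a unique final chip-arrangement σ*, and every maximal firing sequence from any reachable arrangement σ fires the same multiset of vertices. -/
section ChipFiring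

variable {V A : Type} [Fintype V] [Fintype A] [DecidableEq V] (src tgt : A → V)

def outdeg (v : V) : ℕ := (Finset.univ.filter (fun a : A => src a = v)).card

def fire (v : V) (σ : V → ℕ) : V → ℕ :=
  fun w => σ w - (if w = v then outdeg src v else 0)
    + (Finset.univ.filter (fun a : A => src a = v ∧ tgt a = w)).card

def FireStep (σ τ : V → ℕ) : Prop :=
  ∃ v : V, outdeg src v ≤ σ v ∧ τ = fire src tgt v σ

/-- The state obtained from `σ` by firing the vertices of the list `l` in order. -/
def runSeq (σ : V → ℕ) (l : List V) : V → ℕ :=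
  List.foldl (fun s v => fire src tgt v s) σ l

/-- `l` is a valid firing sequence from `σ`: each vertex has enough chips
when it is fired. -/
def ValidSeq (σ : V → ℕ) (l : List V) : Prop :=
  ∀ i : ℕ, ∀ h : i < l.length,
    outdeg src (l.get ⟨i, h⟩) ≤ runSeq src tgt σ (l.take i) (l.get ⟨i, h⟩)

end ChipFiring

section AuxLemmas

variable {V A : Type} [Fintype V] [Fintype A] [DecidableEq V] (src tgt : A → V)

lemma fire_apply (v : V) (σ : V → ℕ) (w : V) :
    fire src tgt v σ w = σ w - (if w = v then outdeg src v else 0)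
      + (Finset.univ.filter (fun a : A => src a = v ∧ tgt a = w)).card := rfl

lemma fire_le {v w : V} (h : w ≠ v) (σ : V → ℕ) : σ w ≤ fire src tgt v σ w := by
  rw [fire_apply, if_neg h]; omega

lemma fire_comm {v w : V} (hvw : v ≠ w) {σ : V → ℕ}
    (hv : outdeg src v ≤ σ v) (hw : outdeg src w ≤ σ w) :
    fire src tgt v (fire src tgt w σ) = fire src tgt w (fire src tgt v σ) := by
  funext u
  by_cases h1 : u = v
  · subst h1
    have h2 : ¬ u = w := fun h => hvw (by simp [h])
    simp [fire_apply, h2]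
    omega
  · by_cases h2 : u = w
    · subst h2
      simp [fire_apply, h1]
      omega
    · simp only [fire_apply, if_neg h1, if_neg h2]
      omega

lemma runSeq_nil (σ : V → ℕ) : runSeq src tgt σ [] = σ := rfl

lemma runSeq_cons (σ : V → ℕ) (v : V) (l : List V) :
    runSeq src tgt σ (v :: l) = runSeq src tgt (fire src tgt v σ) l := rfl

lemma runSeq_append (σ : V → ℕ) (l₁ l₂ : List V) :
    runSeq src tgt σ (l₁ ++ l₂) = runSeq src tgt (runSeq src tgt σ l₁) l₂ := by
  simp [runSeq, List.foldl_append]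

lemma validSeq_nil (σ : V → ℕ) : ValidSeq src tgt σ [] := by
  intro i h; simp at h

lemma validSeq_cons {σ : V → ℕ} {v : V} {l : List V} :
    ValidSeq src tgt σ (v :: l) ↔
      outdeg src v ≤ σ v ∧ ValidSeq src tgt (fire src tgt v σ) l := by
  constructor
  · intro h
    refine ⟨?_, ?_⟩
    · have := h 0 (by simp)
      simpa [runSeq] using this
    · intro i hi
      have := h (i + 1) (by simpa using Nat.succ_lt_succ hi)
      simpa [runSeq, List.take_succ_cons] using this
  · rintro ⟨h0, h⟩ i hi
    cases i with
    | zero => simpa [runSeq] using h0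
    | succ i =>
        have hi' : i < l.length := by simpa using Nat.lt_of_succ_lt_succ hi
        have := h i hi'
        simpa [runSeq, List.take_succ_cons] using this

lemma validSeq_append {σ : V → ℕ} {l₁ l₂ : List V} :
    ValidSeq src tgt σ (l₁ ++ l₂) ↔
      ValidSeq src tgt σ l₁ ∧ ValidSeq src tgt (runSeq src tgt σ l₁) l₂ := by
  induction l₁ generalizing σ with
  | nil => simp [validSeq_nil, runSeq_nil]
  | cons v l ih =>
      simp [validSeq_cons, ih, runSeq_cons, and_assoc]

lemma runSeq_mono {v : V} {l : List V} (hv : v ∉ l) (σ : V → ℕ) :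
    σ v ≤ runSeq src tgt σ l v := by
  induction l generalizing σ with
  | nil => exact le_rfl
  | cons w l ih =>
      have hvw : v ≠ w := fun h => hv (by simp [h])
      have h1 : σ v ≤ fire src tgt w σ v := fire_le src tgt hvw σ
      have h2 := ih (fun h => hv (by simp [h])) (fire src tgt w σ)
      rw [runSeq_cons]
      omega

lemma exists_split_first {v : V} {l : List V} (hv : v ∈ l) :
    ∃ a b : List V, l = a ++ v :: b ∧ v ∉ a := by
  induction l with
  | nil => simp at hv
  | cons w l ih =>
      by_cases h : w = v
      · exact ⟨[], l, by simp [h], by simp⟩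
      · have hv' : v ∈ l := by
          rcases List.mem_cons.mp hv with h' | h'
          · exact absurd h'.symm h
          · exact h'
        obtain ⟨a, b, hab, hna⟩ := ih hv'
        exact ⟨w :: a, b, by simp [hab], by
          simp only [List.mem_cons, not_or]
          exact ⟨fun hh => h hh.symm, hna⟩⟩

lemma swap_to_front {v : V} {b : List V} :
    ∀ (a : List V) (σ : V → ℕ), ValidSeq src tgt σ (a ++ v :: b) → v ∉ a →
      outdeg src v ≤ σ v →
      ValidSeq src tgt σ (v :: (a ++ b)) ∧
        runSeq src tgt σ (v :: (a ++ b)) = runSeq src tgt σ (a ++ v :: b) := by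
  intro a
  induction a with
  | nil => intro σ h _ _; exact ⟨h, rfl⟩
  | cons w a ih =>
      intro σ h hna hv
      have hvw : v ≠ w := fun hh => hna (by simp [hh])
      have hna' : v ∉ a := fun hh => hna (by simp [hh])
      rw [List.cons_append, validSeq_cons] at h
      obtain ⟨hw, h'⟩ := h
      have hv' : outdeg src v ≤ fire src tgt w σ v :=
        le_trans hv (fire_le src tgt hvw σ)
      obtain ⟨ihv, ihr⟩ := ih (fire src tgt w σ) h' hna' hv'
      rw [validSeq_cons] at ihv
      obtain ⟨-, ihv2⟩ := ihv
      have hcomm : fire src tgt v (fire src tgt w σ)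
          = fire src tgt w (fire src tgt v σ) := fire_comm src tgt hvw hv hw
      have hw' : outdeg src w ≤ fire src tgt v σ w :=
        le_trans hw (fire_le src tgt (Ne.symm hvw) σ)
      constructor
      · rw [List.cons_append, validSeq_cons]
        refine ⟨hv, ?_⟩
        rw [validSeq_cons]
        refine ⟨hw', ?_⟩
        rw [← hcomm]
        exact ihv2
      · calc runSeq src tgt σ (v :: (w :: a ++ b))
            = runSeq src tgt (fire src tgt w (fire src tgt v σ)) (a ++ b) := rfl
          _ = runSeq src tgt (fire src tgt v (fire src tgt w σ)) (a ++ b) := by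
              rw [hcomm]
          _ = runSeq src tgt (fire src tgt w σ) (v :: (a ++ b)) := rfl
          _ = runSeq src tgt (fire src tgt w σ) (a ++ v :: b) := ihr
          _ = runSeq src tgt σ (w :: a ++ v :: b) := rfl

lemma stable_valid_nil {σ : V → ℕ} (hs : ∀ v : V, σ v < outdeg src v)
    {l : List V} (hl : ValidSeq src tgt σ l) : l = [] := by
  cases l with
  | nil => rfl
  | cons v l =>
      rw [validSeq_cons] at hl
      exact absurd hl.1 (not_le.mpr (hs v))

lemma abelian : ∀ (n : ℕ) (l₁ : List V) (σ : V → ℕ) (l₂ : List V),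
    l₁.length ≤ n → ValidSeq src tgt σ l₁ → ValidSeq src tgt σ l₂ →
    (∀ v : V, runSeq src tgt σ l₁ v < outdeg src v) →
    (∀ v : V, runSeq src tgt σ l₂ v < outdeg src v) →
    (↑l₁ : Multiset V) = (↑l₂ : Multiset V) ∧
      runSeq src tgt σ l₁ = runSeq src tgt σ l₂ := by
  intro n
  induction n with
  | zero =>
      intro l₁ σ l₂ hlen h₁ h₂ hs₁ hs₂
      have hl₁ : l₁ = [] := List.length_eq_zero_iff.mp (Nat.le_zero.mp hlen)
      subst hl₁
      have : l₂ = [] := stable_valid_nil src tgt (by simpa [runSeq_nil] using hs₁) h₂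
      subst this
      exact ⟨rfl, rfl⟩
  | succ n ih =>
      intro l₁ σ l₂ hlen h₁ h₂ hs₁ hs₂
      cases l₁ with
      | nil =>
          have : l₂ = [] := stable_valid_nil src tgt (by simpa [runSeq_nil] using hs₁) h₂
          subst this
          exact ⟨rfl, rfl⟩
      | cons v l₁' =>
          rw [validSeq_cons] at h₁
          obtain ⟨hv, h₁'⟩ := h₁
          -- v must occur in l₂
          have hvmem : v ∈ l₂ := by
            by_contra hvn
            have := runSeq_mono src tgt hvn σ
            exact absurd (le_trans hv this) (not_le.mpr (hs₂ v))
          obtain ⟨a, b, rfl, hna⟩ := exists_split_first hvmem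
          obtain ⟨hval, hrun⟩ := swap_to_front src tgt a σ h₂ hna hv
          rw [validSeq_cons] at hval
          obtain ⟨-, hval'⟩ := hval
          have hlen' : l₁'.length ≤ n := by simpa using Nat.le_of_succ_le_succ hlen
          have hs₂' : ∀ w : V, runSeq src tgt (fire src tgt v σ) (a ++ b) w
              < outdeg src w := by
            intro w
            have : runSeq src tgt (fire src tgt v σ) (a ++ b)
                = runSeq src tgt σ (a ++ v :: b) := hrun
            rw [this]
            exact hs₂ w
          obtain ⟨hm, hr⟩ := ih l₁' (fire src tgt v σ) (a ++ b) hlen' h₁' hval'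
            (by simpa [runSeq_cons] using hs₁) hs₂'
          constructor
          · have : (↑(v :: l₁') : Multiset V) = v ::ₘ (↑l₁' : Multiset V) := rfl
            rw [this, hm, Multiset.cons_coe, Multiset.coe_eq_coe]
            exact List.perm_middle.symm
          · calc runSeq src tgt σ (v :: l₁')
                = runSeq src tgt (fire src tgt v σ) l₁' := rfl
              _ = runSeq src tgt (fire src tgt v σ) (a ++ b) := hr
              _ = runSeq src tgt σ (a ++ v :: b) := hrun

lemma reach_exists_list {σ τ : V → ℕ}
    (h : Relation.ReflTransGen (FireStep src tgt) σ τ) :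
    ∃ l : List V, ValidSeq src tgt σ l ∧ runSeq src tgt σ l = τ := by
  induction h with
  | refl => exact ⟨[], validSeq_nil src tgt σ, rfl⟩
  | tail hstep hfire ih =>
      obtain ⟨l, hl, hrun⟩ := ih
      obtain ⟨v, hv, rfl⟩ := hfire
      refine ⟨l ++ [v], ?_, ?_⟩
      · rw [validSeq_append]
        refine ⟨hl, ?_⟩
        rw [validSeq_cons]
        exact ⟨by rw [hrun]; exact hv, validSeq_nil src tgt _⟩
      · rw [runSeq_append, hrun]
        rfl

lemma outdeg_eq_sum (v : V) :
    outdeg src v = ∑ w : V,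
      (Finset.univ.filter (fun a : A => src a = v ∧ tgt a = w)).card := by
  rw [outdeg]
  rw [Finset.card_eq_sum_card_fiberwise (f := tgt) (t := Finset.univ)
    (fun a _ => Finset.mem_univ _)]
  congr 1
  funext w
  rw [Finset.filter_filter]

lemma sum_fire {v : V} {σ : V → ℕ} (hv : outdeg src v ≤ σ v) :
    ∑ w : V, fire src tgt v σ w = ∑ w : V, σ w := by
  have key : ∀ w : V, fire src tgt v σ w + (if w = v then outdeg src v else 0)
      = σ w + (Finset.univ.filter (fun a : A => src a = v ∧ tgt a = w)).card := by
    intro w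
    rw [fire_apply]
    by_cases h : w = v
    · subst h; simp; omega
    · simp [h]
  have hsum := Finset.sum_congr rfl (fun w (_ : w ∈ Finset.univ) => key w)
  rw [Finset.sum_add_distrib, Finset.sum_add_distrib] at hsum
  rw [Finset.sum_ite_eq' Finset.univ v (fun _ => outdeg src v)] at hsum
  rw [← outdeg_eq_sum src tgt v] at hsum
  simp only [Finset.mem_univ, if_pos] at hsum
  omega

lemma reach_sum {σ₀ σ : V → ℕ}
    (h : Relation.ReflTransGen (FireStep src tgt) σ₀ σ) :
    ∑ v : V, σ v = ∑ v : V, σ₀ v := by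
  induction h with
  | refl => rfl
  | tail hstep hfire ih =>
      obtain ⟨v, hv, rfl⟩ := hfire
      rw [sum_fire src tgt hv, ih]

noncomputable def chainAux (σ₀ : V → ℕ)
    (H : ∀ σ : {σ : V → ℕ // Relation.ReflTransGen (FireStep src tgt) σ₀ σ},
      ∃ τ, FireStep src tgt σ.1 τ) :
    ℕ → {σ : V → ℕ // Relation.ReflTransGen (FireStep src tgt) σ₀ σ}
  | 0 => ⟨σ₀, Relation.ReflTransGen.refl⟩
  | n + 1 =>
      ⟨(H (chainAux σ₀ H n)).choose,
        (chainAux σ₀ H n).2.tail (H (chainAux σ₀ H n)).choose_spec⟩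

lemma chainAux_step (σ₀ : V → ℕ)
    (H : ∀ σ : {σ : V → ℕ // Relation.ReflTransGen (FireStep src tgt) σ₀ σ},
      ∃ τ, FireStep src tgt σ.1 τ) (n : ℕ) :
    FireStep src tgt (chainAux src tgt σ₀ H n).1 (chainAux src tgt σ₀ H (n + 1)).1 :=
  (H (chainAux src tgt σ₀ H n)).choose_spec

lemma chainAux_transGen (σ₀ : V → ℕ)
    (H : ∀ σ : {σ : V → ℕ // Relation.ReflTransGen (FireStep src tgt) σ₀ σ},
      ∃ τ, FireStep src tgt σ.1 τ) :
    ∀ m n : ℕ, m < n →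
      Relation.TransGen (FireStep src tgt)
        (chainAux src tgt σ₀ H m).1 (chainAux src tgt σ₀ H n).1 := by
  intro m n
  induction n with
  | zero => intro h; exact absurd h (Nat.not_lt_zero m)
  | succ n ih =>
      intro h
      rcases Nat.lt_succ_iff_lt_or_eq.mp h with h' | h'
      · exact (ih h').tail (chainAux_step src tgt σ₀ H n)
      · subst h'
        exact Relation.TransGen.single (chainAux_step src tgt σ₀ H m)

end AuxLemmas


/-- In a finite chip-firing game there is a unique reachable arrangement in
which no vertex can fire, and any two maximal firing sequences from a common
reachable arrangement fire the same multiset of vertices. -/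
theorem stmt_18 {V A : Type} [Fintype V] [Fintype A] [DecidableEq V]
    (src tgt : A → V) (σ₀ : V → ℕ)
    (hfin : ∀ σ : V → ℕ, Relation.ReflTransGen (FireStep src tgt) σ₀ σ →
      ¬ Relation.TransGen (FireStep src tgt) σ σ) :
    (∃! σf : V → ℕ, Relation.ReflTransGen (FireStep src tgt) σ₀ σf ∧
      ∀ v : V, σf v < outdeg src v) ∧
    (∀ σ : V → ℕ, Relation.ReflTransGen (FireStep src tgt) σ₀ σ →
      ∀ l₁ l₂ : List V, ValidSeq src tgt σ l₁ → ValidSeq src tgt σ l₂ →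
        (∀ v : V, runSeq src tgt σ l₁ v < outdeg src v) →
        (∀ v : V, runSeq src tgt σ l₂ v < outdeg src v) →
        (↑l₁ : Multiset V) = (↑l₂ : Multiset V)) := by
  
  constructor
  · -- existence and uniqueness of the stable reachable state
    -- existence
    have hex : ∃ σf : V → ℕ, Relation.ReflTransGen (FireStep src tgt) σ₀ σf ∧
        ∀ v : V, σf v < outdeg src v := by
      by_contra hno
      push_neg at hno
      have H : ∀ σ : {σ : V → ℕ // Relation.ReflTransGen (FireStep src tgt) σ₀ σ},
          ∃ τ, FireStep src tgt σ.1 τ := by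
        intro σ
        obtain ⟨v, hv⟩ := hno σ.1 σ.2
        exact ⟨fire src tgt v σ.1, v, hv, rfl⟩
      set N : ℕ := ∑ v : V, σ₀ v with hN
      have hmaps : ∀ n : ℕ, (chainAux src tgt σ₀ H n).1 ∈
          Set.pi Set.univ (fun _ : V => Set.Iic N) := by
        intro n v _
        have hsum := reach_sum src tgt (chainAux src tgt σ₀ H n).2
        have : (chainAux src tgt σ₀ H n).1 v ≤ ∑ w : V, (chainAux src tgt σ₀ H n).1 w :=
          Finset.single_le_sum (fun w _ => Nat.zero_le _) (Finset.mem_univ v)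
        simp only [Set.mem_Iic]
        omega
      have hfinset : (Set.pi Set.univ (fun _ : V => Set.Iic N)).Finite :=
        Set.Finite.pi (fun _ => Set.finite_Iic N)
      obtain ⟨m, -, n, -, hmn, heq⟩ :=
        Set.infinite_univ.exists_ne_map_eq_of_mapsTo
          (f := fun n : ℕ => (chainAux src tgt σ₀ H n).1)
          (fun n _ => hmaps n) hfinset
      rcases (Ne.lt_or_gt hmn) with h | h
      · have := chainAux_transGen src tgt σ₀ H m n h
        rw [heq] at this
        exact hfin _ (chainAux src tgt σ₀ H n).2 this
      · have := chainAux_transGen src tgt σ₀ H n m h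
        rw [heq] at this
        exact hfin _ (chainAux src tgt σ₀ H n).2 this
    obtain ⟨σf, hreach, hstab⟩ := hex
    refine ⟨σf, ⟨hreach, hstab⟩, ?_⟩
    rintro σg ⟨hreach', hstab'⟩
    obtain ⟨l₁, hl₁, hr₁⟩ := reach_exists_list src tgt hreach'
    obtain ⟨l₂, hl₂, hr₂⟩ := reach_exists_list src tgt hreach
    have := (abelian src tgt l₁.length l₁ σ₀ l₂ le_rfl hl₁ hl₂
      (by rw [hr₁]; exact hstab') (by rw [hr₂]; exact hstab)).2
    rw [hr₁, hr₂] at this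
    exact this
  · intro σ _ l₁ l₂ h₁ h₂ hs₁ hs₂
    exact (abelian src tgt l₁.length l₁ σ l₂ le_rfl h₁ h₂ hs₁ hs₂).1
end

section
/- Fix v_0 ∈ V in a connected digraph D with capacities c_l ≤ c_u. The set Π_{v_0}(D,c_l,c_u) of feasible vertex potentials π : V → ℤ with π(v_0)=0 and c_l(a) ≤ π(w) − π(v) ≤ c_u(a) for every arc a=(v,w) is closed under componentwise maximum and componentwise minimum; hence, if nonempty and finite, it is a distributive lattice under the componentwise order. -/
/-- A feasible vertex potential: value `0` at the forbidden vertex `v₀` and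
the difference along every arc bounded by the capacities. -/
def FeasiblePotential {V A : Type*} (src tgt : A → V) (v₀ : V) (cl cu : A → ℤ)
    (π : V → ℤ) : Prop :=
  π v₀ = 0 ∧ ∀ a : A, cl a ≤ π (tgt a) - π (src a) ∧ π (tgt a) - π (src a) ≤ cu a

lemma closed_key {V A : Type} (src tgt : A → V) (v₀ : V) (cl cu : A → ℤ)
    (π π' : V → ℤ) (h : FeasiblePotential src tgt v₀ cl cu π)
    (h' : FeasiblePotential src tgt v₀ cl cu π') :
    FeasiblePotential src tgt v₀ cl cu (π ⊔ π') ∧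
    FeasiblePotential src tgt v₀ cl cu (π ⊓ π') := by
  obtain ⟨h0, hb⟩ := h
  obtain ⟨h0', hb'⟩ := h'
  constructor <;> refine ⟨by simp [h0, h0'], fun a => ?_⟩ <;>
  · obtain ⟨l1, u1⟩ := hb a
    obtain ⟨l2, u2⟩ := hb' a
    simp only [Pi.sup_apply, Pi.inf_apply] at *
    rcases le_total (π (tgt a)) (π' (tgt a)) with ht | ht <;>
      rcases le_total (π (src a)) (π' (src a)) with hs | hs <;>
      simp [max_eq_left, max_eq_right, min_eq_left, min_eq_right, ht, hs] <;> omega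

/-- The set of feasible vertex potentials is closed under componentwise max
and min; hence, under the componentwise order, pairwise suprema and infima
exist in the set of feasible potentials and are given componentwise — a
distributive lattice structure. -/
theorem stmt_19 {V A : Type} (src tgt : A → V) (v₀ : V) (cl cu : A → ℤ) :
    (∀ π π' : V → ℤ, FeasiblePotential src tgt v₀ cl cu π →
      FeasiblePotential src tgt v₀ cl cu π' →
      FeasiblePotential src tgt v₀ cl cu (π ⊔ π') ∧
      FeasiblePotential src tgt v₀ cl cu (π ⊓ π')) ∧
    (∀ x y : {π : V → ℤ // FeasiblePotential src tgt v₀ cl cu π},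
      (∃ s : {π : V → ℤ // FeasiblePotential src tgt v₀ cl cu π},
        IsLUB {x, y} s ∧ s.1 = x.1 ⊔ y.1) ∧
      (∃ m : {π : V → ℤ // FeasiblePotential src tgt v₀ cl cu π},
        IsGLB {x, y} m ∧ m.1 = x.1 ⊓ y.1)) := by
  refine ⟨fun π π' h h' => closed_key src tgt v₀ cl cu π π' h h', fun x y => ?_⟩
  obtain ⟨hsup, hinf⟩ := closed_key src tgt v₀ cl cu x.1 y.1 x.2 y.2
  constructor
  · refine ⟨⟨x.1 ⊔ y.1, hsup⟩, ⟨?_, ?_⟩, rfl⟩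
    · rintro z (rfl | rfl)
      · exact Subtype.coe_le_coe.mp le_sup_left
      · exact Subtype.coe_le_coe.mp le_sup_right
    · rintro z hz
      have h1 : x ≤ z := hz (by simp)
      have h2 : y ≤ z := hz (by simp)
      exact Subtype.coe_le_coe.mp (sup_le h1 h2)
  · refine ⟨⟨x.1 ⊓ y.1, hinf⟩, ⟨?_, ?_⟩, rfl⟩
    · rintro z (rfl | rfl)
      · exact Subtype.coe_le_coe.mp inf_le_left
      · exact Subtype.coe_le_coe.mp inf_le_right
    · rintro z hz
      have h1 : z ≤ x := hz (by simp)
      have h2 : z ≤ y := hz (by simp)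
      exact Subtype.coe_le_coe.mp (le_inf h1 h2)
end
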